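/- arXiv:2506.12926 — 5 statements merged into one kernel-verified Lean document; each statement's English description precedes it below -/
import Mathlib

section
/- Let 0 < α ≤ 1, β > α, and f continuous on [t₀, t₁]. If ∫_{t₀}^{t₁} (t₁−t)^(α−1) [Γ(α)(t₁−t)^(β−α) f(t) − k₀]² dt = 0, where k₀ = (Γ(α+1)/(t₁−t₀)^α) ∫_{t₀}^{t₁} (t₁−t)^(β−1) f(t) dt, then f(t) = 0 for all t ∈ [t₀, t₁). -/
open MeasureTheory intervalIntegral Set Filter Topology

theorem stmt2 (t₀ t₁ α β : ℝ) (f : ℝ → ℝ)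
    (ht : t₀ < t₁) (hα0 : 0 < α) (hα1 : α ≤ 1) (hβ : α < β)
    (hf : ContinuousOn f (Set.Icc t₀ t₁))
    (k₀ : ℝ)
    (hk₀ : k₀ = Real.Gamma (α + 1) / (t₁ - t₀) ^ α *
      ∫ t in t₀..t₁, (t₁ - t) ^ (β - 1) * f t)
    (hint : (∫ t in t₀..t₁, (t₁ - t) ^ (α - 1) *
      (Real.Gamma α * (t₁ - t) ^ (β - α) * f t - k₀) ^ 2) = 0) :
    ∀ t ∈ Set.Ico t₀ t₁, f t = 0 := by
  have hΓ : 0 < Real.Gamma α := Real.Gamma_pos_of_pos hα0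
  set h : ℝ → ℝ := fun t => Real.Gamma α * (t₁ - t) ^ (β - α) * f t - k₀ with hh
  set g : ℝ → ℝ := fun t => (t₁ - t) ^ (α - 1) * (h t) ^ 2 with hg
  have hcont_pow : ContinuousOn (fun t : ℝ => (t₁ - t) ^ (β - α)) (Set.Icc t₀ t₁) := by
    apply ContinuousOn.rpow_const (by fun_prop)
    intro x _
    right; linarith
  have hhc : ContinuousOn h (Set.Icc t₀ t₁) :=
    ((continuousOn_const.mul hcont_pow).mul hf).sub continuousOn_const
  -- integrability of the weight
  have hint_pow : IntervalIntegrable (fun t : ℝ => (t₁ - t) ^ (α - 1)) volume t₀ t₁ := by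
    have h1 : IntervalIntegrable (fun x : ℝ => x ^ (α - 1)) volume (t₁ - t₁) (t₁ - t₀) :=
      intervalIntegral.intervalIntegrable_rpow' (by linarith)
    simpa using (h1.comp_sub_left t₁).symm
  have hg_int : IntervalIntegrable g volume t₀ t₁ := by
    apply hint_pow.mul_continuousOn
    rw [Set.uIcc_of_le ht.le]
    exact hhc.pow 2
  -- g is nonneg on [t₀, t₁]
  have hg_nonneg : ∀ x ∈ Set.Icc t₀ t₁, 0 ≤ g x := by
    intro x hx
    have : (0:ℝ) ≤ (t₁ - x) ^ (α - 1) := Real.rpow_nonneg (by linarith [hx.2]) _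
    positivity
  -- h vanishes on Ico
  have hzero : ∀ s ∈ Set.Ico t₀ t₁, h s = 0 := by
    by_contra hcon
    push_neg at hcon
    obtain ⟨s, hs, hne⟩ := hcon
    have hcw : ContinuousWithinAt h (Set.Icc t₀ t₁) s :=
      hhc s ⟨hs.1, hs.2.le⟩
    have hmem : {x : ℝ | h x ≠ 0} ∈ 𝓝[Set.Icc t₀ t₁] s :=
      hcw (isOpen_compl_singleton.mem_nhds hne)
    rw [Metric.mem_nhdsWithin_iff] at hmem
    obtain ⟨ε, hε, hball⟩ := hmem
    set u : ℝ := min (s + ε / 2) ((s + t₁) / 2) with hu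
    have hsu : s < u := by
      apply lt_min (by linarith) (by linarith [hs.2])
    have hut : u < t₁ := min_lt_of_right_lt (by linarith [hs.2])
    have hsub : ∀ x ∈ Set.Ioo s u, h x ≠ 0 := by
      intro x hx
      apply hball
      constructor
      · rw [Metric.mem_ball, Real.dist_eq, abs_lt]
        constructor
        · linarith [hx.1, hε]
        · have := hx.2.trans_le (min_le_left _ _)
          linarith
      · exact ⟨by linarith [hs.1, hx.1], le_of_lt (hx.2.trans_le ((min_le_right _ _).trans (by linarith [hs.2])))⟩
    have hsub1 : Set.uIcc t₀ s ⊆ Set.uIcc t₀ t₁ := by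
      rw [Set.uIcc_of_le hs.1, Set.uIcc_of_le ht.le]
      exact Set.Icc_subset_Icc le_rfl hs.2.le
    have hsub2 : Set.uIcc s u ⊆ Set.uIcc t₀ t₁ := by
      rw [Set.uIcc_of_le hsu.le, Set.uIcc_of_le ht.le]
      exact Set.Icc_subset_Icc hs.1 hut.le
    have hsub3 : Set.uIcc u t₁ ⊆ Set.uIcc t₀ t₁ := by
      rw [Set.uIcc_of_le hut.le, Set.uIcc_of_le ht.le]
      exact Set.Icc_subset_Icc (hs.1.trans hsu.le) le_rfl
    have hi1 := hg_int.mono_set hsub1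
    have hi2 := hg_int.mono_set hsub2
    have hi3 := hg_int.mono_set hsub3
    have hpos : 0 < ∫ t in s..u, g t := by
      apply intervalIntegral.intervalIntegral_pos_of_pos_on hi2 _ hsu
      intro x hx
      have hx1 : h x ≠ 0 := hsub x hx
      have hlt : x < t₁ := hx.2.trans_le hut.le
      have : (0:ℝ) < (t₁ - x) ^ (α - 1) := Real.rpow_pos_of_pos (by linarith) _
      positivity
    have hnn1 : 0 ≤ ∫ t in t₀..s, g t := by
      apply intervalIntegral.integral_nonneg hs.1
      intro x hx
      exact hg_nonneg x ⟨hx.1, hx.2.trans hs.2.le⟩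
    have hnn3 : 0 ≤ ∫ t in u..t₁, g t := by
      apply intervalIntegral.integral_nonneg hut.le
      intro x hx
      exact hg_nonneg x ⟨(hs.1.trans hsu.le).trans hx.1, hx.2⟩
    have hsplit : (∫ t in t₀..t₁, g t) =
        (∫ t in t₀..s, g t) + (∫ t in s..u, g t) + (∫ t in u..t₁, g t) := by
      rw [intervalIntegral.integral_add_adjacent_intervals hi1 hi2,
        intervalIntegral.integral_add_adjacent_intervals (hi1.trans hi2) hi3]
    rw [hint] at hsplit
    linarith
  -- k₀ = 0 by taking the limit t → t₁ from the left within Ico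
  have hne : (𝓝[Set.Ico t₀ t₁] t₁).NeBot := by
    apply mem_closure_iff_nhdsWithin_neBot.mp
    rw [closure_Ico ht.ne]
    exact ⟨ht.le, le_rfl⟩
  have hk : k₀ = 0 := by
    have hfl : Tendsto f (𝓝[Set.Ico t₀ t₁] t₁) (𝓝 (f t₁)) :=
      (hf t₁ ⟨ht.le, le_rfl⟩).mono_left
        (nhdsWithin_mono _ Set.Ico_subset_Icc_self)
    have hpl : Tendsto (fun t : ℝ => (t₁ - t) ^ (β - α)) (𝓝[Set.Ico t₀ t₁] t₁) (𝓝 0) := by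
      have h1 : Tendsto (fun t : ℝ => t₁ - t) (𝓝[Set.Ico t₀ t₁] t₁) (𝓝 0) := by
        have h0 : Tendsto (fun t : ℝ => t₁ - t) (𝓝 t₁) (𝓝 (t₁ - t₁)) :=
          (continuous_const.sub continuous_id).tendsto t₁
        simpa using h0.mono_left nhdsWithin_le_nhds
      have h2 : ContinuousAt (fun x : ℝ => x ^ (β - α)) 0 :=
        Real.continuousAt_rpow_const 0 _ (Or.inr (by linarith))
      have := h2.tendsto.comp h1
      simpa [Real.zero_rpow (by linarith : β - α ≠ 0), Function.comp_def] using this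
    have hlim : Tendsto (fun t => Real.Gamma α * (t₁ - t) ^ (β - α) * f t)
        (𝓝[Set.Ico t₀ t₁] t₁) (𝓝 0) := by
      have := ((tendsto_const_nhds (x := Real.Gamma α)).mul hpl).mul hfl
      simpa using this
    have heq : (fun t => Real.Gamma α * (t₁ - t) ^ (β - α) * f t) =ᶠ[𝓝[Set.Ico t₀ t₁] t₁]
        (fun _ => k₀) := by
      filter_upwards [self_mem_nhdsWithin] with x hx
      have := hzero x hx
      simp only [hh] at this
      linarith
    have : Tendsto (fun _ : ℝ => k₀) (𝓝[Set.Ico t₀ t₁] t₁) (𝓝 0) := hlim.congr' heq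
    exact tendsto_const_nhds_iff.mp this
  intro t htm
  have h0 := hzero t htm
  rw [hh, hk] at h0
  simp only [sub_zero] at h0
  have hp : (0:ℝ) < (t₁ - t) ^ (β - α) := Real.rpow_pos_of_pos (by linarith [htm.2]) _
  rcases mul_eq_zero.mp h0 with h1 | h1
  · rcases mul_eq_zero.mp h1 with h2 | h2
    · exact absurd h2 hΓ.ne'
    · exact absurd h2 hp.ne'
  · exact h1
end

section
/- Let 0 < β ≤ α ≤ 1 and f continuous on [t₀, t₁]. Suppose that for every continuous ψ : [t₀, t₁] → ℝ with ∫_{t₀}^{t₁} (t₁−t)^(α−1) ψ(t) dt = 0 one has ∫_{t₀}^{t₁} (t₁−t)^(β−1) f(t) ψ(t) dt = 0. Then there exists a constant k such that f(t) = (k/Γ(α))·(t₁−t)^(α−β) for all t ∈ [t₀, t₁). -/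
open MeasureTheory intervalIntegral Set

/-- Fractional Du Bois-Reymond lemma, case 0 < β ≤ α ≤ 1. -/
theorem stmt4 (t₀ t₁ α β : ℝ) (f : ℝ → ℝ)
    (ht : t₀ < t₁) (hβ0 : 0 < β) (hβα : β ≤ α) (hα1 : α ≤ 1)
    (hf : ContinuousOn f (Set.Icc t₀ t₁))
    (h : ∀ ψ : ℝ → ℝ, ContinuousOn ψ (Set.Icc t₀ t₁) →
      (∫ t in t₀..t₁, (t₁ - t) ^ (α - 1) * ψ t) = 0 →
      (∫ t in t₀..t₁, (t₁ - t) ^ (β - 1) * f t * ψ t) = 0) :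
    ∃ k : ℝ, ∀ t ∈ Set.Ico t₀ t₁,
      f t = k / Real.Gamma α * (t₁ - t) ^ (α - β) := by
  have huIcc : Set.uIcc t₀ t₁ = Set.Icc t₀ t₁ := Set.uIcc_of_le ht.le
  have hα0 : 0 < α := lt_of_lt_of_le hβ0 hβα
  -- continuity of p
  have hcontp : Continuous (fun t : ℝ => (t₁ - t) ^ (α - β)) := by
    refine continuous_iff_continuousAt.2 fun x => ?_
    exact (Real.continuousAt_rpow_const _ _ (Or.inr (sub_nonneg.2 hβα))).comp
      ((continuous_const.sub continuous_id).continuousAt)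
  -- integrability of weights
  have hW : ∀ r : ℝ, -1 < r → IntervalIntegrable (fun t => (t₁ - t) ^ r) volume t₀ t₁ := by
    intro r hr
    have := (intervalIntegrable_rpow' (a := t₁ - t₀) (b := 0) hr).comp_sub_left t₁
    simpa using this
  -- value of weight integrals
  have hWval : ∀ r : ℝ, -1 < r →
      (∫ t in t₀..t₁, (t₁ - t) ^ r) = (t₁ - t₀) ^ (r + 1) / (r + 1) := by
    intro r hr
    rw [show (∫ t in t₀..t₁, (t₁ - t) ^ r) = ∫ x in (t₁ - t₁)..(t₁ - t₀), x ^ r from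
      intervalIntegral.integral_comp_sub_left (fun x => x ^ r) t₁]
    rw [sub_self, integral_rpow (Or.inl hr), Real.zero_rpow (by linarith : r + 1 ≠ 0)]
    ring
  have hr2 : (-1 : ℝ) < 2 * α - β - 1 := by linarith
  have hrα : (-1 : ℝ) < α - 1 := by linarith
  have hrβ : (-1 : ℝ) < β - 1 := by linarith
  have hI : 0 < ∫ t in t₀..t₁, (t₁ - t) ^ (2 * α - β - 1) := by
    rw [hWval _ hr2]
    exact div_pos (Real.rpow_pos_of_pos (sub_pos.2 ht) _) (by linarith)
  set c : ℝ := (∫ t in t₀..t₁, (t₁ - t) ^ (α - 1) * f t) / (∫ t in t₀..t₁, (t₁ - t) ^ (2 * α - β - 1)) with hc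
  set g : ℝ → ℝ := fun t => f t - c * (t₁ - t) ^ (α - β) with hgdef
  have hg : ContinuousOn g (Set.Icc t₀ t₁) :=
    hf.sub ((continuous_const.mul hcontp).continuousOn)
  have hg' : ContinuousOn g (Set.uIcc t₀ t₁) := huIcc ▸ hg
  have hf' : ContinuousOn f (Set.uIcc t₀ t₁) := huIcc ▸ hf
  have hne : ∀ᵐ x : ℝ, x ≠ t₁ := by
    simp [MeasureTheory.ae_iff]
  -- integrabilities
  have hA : IntervalIntegrable (fun t => (t₁ - t) ^ (α - 1) * f t) volume t₀ t₁ :=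
    (hW _ hrα).mul_continuousOn hf'
  have hC : IntervalIntegrable (fun t => (t₁ - t) ^ (α - 1) * g t) volume t₀ t₁ :=
    (hW _ hrα).mul_continuousOn hg'
  have hB : IntervalIntegrable (fun t => (t₁ - t) ^ (β - 1) * f t * g t) volume t₀ t₁ :=
    ((hW _ hrβ).mul_continuousOn hf').mul_continuousOn hg'
  have hD : IntervalIntegrable (fun t => (t₁ - t) ^ (β - 1) * g t ^ 2) volume t₀ t₁ :=
    (hW _ hrβ).mul_continuousOn ((hg'.pow 2))
  have hP : IntervalIntegrable (fun t => c * ((t₁ - t) ^ (α - 1) * (t₁ - t) ^ (α - β))) volume t₀ t₁ :=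
    (((hW _ hrα).mul_continuousOn hcontp.continuousOn)).const_mul c
  -- the constraint integral vanishes
  have hvp : ∀ᵐ x : ℝ, x ∈ Set.uIoc t₀ t₁ →
      (t₁ - x) ^ (α - 1) * (t₁ - x) ^ (α - β) = (t₁ - x) ^ (2 * α - β - 1) := by
    filter_upwards [hne] with x hx hmem
    have hx1 : 0 < t₁ - x := by
      rw [Set.uIoc_of_le ht.le] at hmem
      exact sub_pos.2 (lt_of_le_of_ne hmem.2 hx)
    rw [← Real.rpow_add hx1]
    ring_nf
  have hconstraint : (∫ t in t₀..t₁, (t₁ - t) ^ (α - 1) * g t) = 0 := by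
    have h1 : (∫ t in t₀..t₁, (t₁ - t) ^ (α - 1) * g t)
        = ∫ t in t₀..t₁, ((t₁ - t) ^ (α - 1) * f t
            - c * ((t₁ - t) ^ (α - 1) * (t₁ - t) ^ (α - β))) := by
      congr 1; funext t; simp only [hgdef]; ring
    rw [h1, intervalIntegral.integral_sub hA hP, intervalIntegral.integral_const_mul]
    rw [intervalIntegral.integral_congr_ae hvp]
    rw [hc]
    rw [div_mul_cancel₀ _ hI.ne', sub_self]
  have hfg : (∫ t in t₀..t₁, (t₁ - t) ^ (β - 1) * f t * g t) = 0 := h g hg hconstraint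
  -- the squared integral vanishes
  have hQ : (∫ t in t₀..t₁, (t₁ - t) ^ (β - 1) * g t ^ 2) = 0 := by
    have h1 : (∫ t in t₀..t₁, (t₁ - t) ^ (β - 1) * g t ^ 2)
        = ∫ t in t₀..t₁, ((t₁ - t) ^ (β - 1) * f t * g t
            - c * ((t₁ - t) ^ (α - 1) * g t)) := by
      apply intervalIntegral.integral_congr_ae
      filter_upwards [hne] with x hx hmem
      have hx1 : 0 < t₁ - x := by
        rw [Set.uIoc_of_le ht.le] at hmem
        exact sub_pos.2 (lt_of_le_of_ne hmem.2 hx)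
      have key : (t₁ - x) ^ (α - 1) = (t₁ - x) ^ (β - 1) * (t₁ - x) ^ (α - β) := by
        rw [← Real.rpow_add hx1]; ring_nf
      rw [key]; simp only [hgdef]; ring
    rw [h1, intervalIntegral.integral_sub hB (hC.const_mul c),
      intervalIntegral.integral_const_mul, hfg, hconstraint]
    ring
  -- pointwise vanishing of g on Ico
  refine ⟨c * Real.Gamma α, fun t htm => ?_⟩
  have hΓ : Real.Gamma α ≠ 0 := (Real.Gamma_pos_of_pos hα0).ne'
  have hgt0 : g t = 0 := by
    by_contra hgt
    have hmemIcc : t ∈ Set.Icc t₀ t₁ := ⟨htm.1, htm.2.le⟩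
    have hev : {x | g x ≠ 0} ∈ nhdsWithin t (Set.Icc t₀ t₁) :=
      hg.continuousWithinAt hmemIcc (isOpen_compl_singleton.mem_nhds hgt)
    obtain ⟨U, hUopen, htU, hUsub⟩ := mem_nhdsWithin.1 hev
    obtain ⟨ε, hε, hball⟩ := Metric.isOpen_iff.1 hUopen t htU
    set b' : ℝ := min (t + ε) t₁ with hb'
    have htb' : t < b' := lt_min (by linarith) htm.2
    have hb't₁ : b' ≤ t₁ := min_le_right _ _
    have hsub : ∀ x ∈ Set.Ioo t b', g x ≠ 0 := by
      intro x hx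
      apply hUsub
      constructor
      · apply hball
        rw [Metric.mem_ball, Real.dist_eq, abs_of_nonneg (by linarith [hx.1])]
        have := hx.2
        have : x < t + ε := lt_of_lt_of_le hx.2 (min_le_left _ _)
        linarith
      · exact ⟨le_trans htm.1 hx.1.le, le_trans hx.2.le hb't₁⟩
    -- positivity of middle piece
    have hmono1 : Set.uIcc t₀ t ⊆ Set.uIcc t₀ t₁ := by
      rw [huIcc, Set.uIcc_of_le htm.1]; exact Set.Icc_subset_Icc le_rfl htm.2.le
    have hmono2 : Set.uIcc t b' ⊆ Set.uIcc t₀ t₁ := by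
      rw [huIcc, Set.uIcc_of_le htb'.le]; exact Set.Icc_subset_Icc htm.1 hb't₁
    have hmono3 : Set.uIcc b' t₁ ⊆ Set.uIcc t₀ t₁ := by
      rw [huIcc, Set.uIcc_of_le hb't₁]
      exact Set.Icc_subset_Icc (le_trans htm.1 htb'.le) le_rfl
    have hD1 := hD.mono_set hmono1
    have hD2 := hD.mono_set hmono2
    have hD3 := hD.mono_set hmono3
    have hpos : 0 < ∫ x in t..b', (t₁ - x) ^ (β - 1) * g x ^ 2 := by
      apply intervalIntegral_pos_of_pos_on hD2 _ htb'
      intro x hx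
      have hx1 : 0 < t₁ - x := sub_pos.2 (lt_of_lt_of_le hx.2 hb't₁)
      exact mul_pos (Real.rpow_pos_of_pos hx1 _) (pow_two_pos_of_ne_zero (hsub x hx))
    have hnn1 : 0 ≤ ∫ x in t₀..t, (t₁ - x) ^ (β - 1) * g x ^ 2 := by
      apply intervalIntegral.integral_nonneg htm.1
      intro u hu
      have : (0:ℝ) ≤ t₁ - u := by linarith [hu.2, htm.2]
      positivity
    have hnn3 : 0 ≤ ∫ x in b'..t₁, (t₁ - x) ^ (β - 1) * g x ^ 2 := by
      apply intervalIntegral.integral_nonneg hb't₁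
      intro u hu
      have : (0:ℝ) ≤ t₁ - u := by linarith [hu.2]
      positivity
    have hadd1 := intervalIntegral.integral_add_adjacent_intervals hD1 hD2
    have hadd2 := intervalIntegral.integral_add_adjacent_intervals (hD1.trans hD2) hD3
    rw [← hadd1] at hadd2
    rw [hQ] at hadd2
    linarith
  have : f t = c * (t₁ - t) ^ (α - β) := by
    have := hgt0
    simp only [hgdef] at this
    linarith
  rw [this]
  field_simp
end

section
/- Let 0 < α ≤ 1 < β and f continuous on [t₀, t₁]. Suppose that for every continuous ψ : [t₀, t₁] → ℝ with ∫_{t₀}^{t₁} (t₁−t)^(α−1) ψ(t) dt = 0 one has ∫_{t₀}^{t₁} (t₁−t)^(β−1) f(t) ψ(t) dt = 0. Then f(t) = 0 for every t ∈ [t₀, t₁). -/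
set_option maxHeartbeats 1000000
open MeasureTheory Set Filter Topology intervalIntegral

/-- Fractional Du Bois-Reymond lemma, case β > α. -/
theorem stmt5 (t₀ t₁ α β : ℝ) (f : ℝ → ℝ)
    (ht : t₀ < t₁) (hα0 : 0 < α) (hα1 : α ≤ 1) (hβ : 1 < β)
    (hf : ContinuousOn f (Set.Icc t₀ t₁))
    (h : ∀ ψ : ℝ → ℝ, ContinuousOn ψ (Set.Icc t₀ t₁) →
      (∫ t in t₀..t₁, (t₁ - t) ^ (α - 1) * ψ t) = 0 →
      (∫ t in t₀..t₁, (t₁ - t) ^ (β - 1) * f t * ψ t) = 0) :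
    ∀ t ∈ Set.Ico t₀ t₁, f t = 0 := by
  have huIcc : uIcc t₀ t₁ = Icc t₀ t₁ := uIcc_of_le ht.le
  -- integrability of the weights
  have hwint : ∀ γ : ℝ, 0 < γ →
      IntervalIntegrable (fun t => (t₁ - t) ^ (γ - 1)) volume t₀ t₁ := by
    intro γ hγ
    have h1 : IntervalIntegrable (fun x : ℝ => x ^ (γ - 1)) volume (t₁ - t₀) 0 :=
      intervalIntegrable_rpow' (by linarith)
    simpa using h1.comp_sub_left t₁
  have hiα := hwint α hα0
  have hiβ := hwint β (by linarith)
  -- value of A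
  have hA : (∫ t in t₀..t₁, (t₁ - t) ^ (α - 1)) = (t₁ - t₀) ^ α / α := by
    have := intervalIntegral.integral_comp_sub_left (a := t₀) (b := t₁)
      (fun x : ℝ => x ^ (α - 1)) t₁
    rw [this]
    rw [integral_rpow (Or.inl (by linarith))]
    rw [sub_add_cancel, sub_self, Real.zero_rpow (by positivity), sub_zero]
  set A : ℝ := (t₁ - t₀) ^ α / α with hAdef
  have hApos : 0 < A := by
    apply div_pos _ hα0
    exact Real.rpow_pos_of_pos (by linarith) α
  set B : ℝ := ∫ t in t₀..t₁, (t₁ - t) ^ (β - 1) * f t with hBdef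
  set k : ℝ := B / A with hkdef
  set ψ : ℝ → ℝ := fun t => (t₁ - t) ^ (β - α) * f t - k with hψdef
  have hkA : k * A = B := by
    rw [hkdef]; field_simp
  clear_value A B k ψ
  have hpowcont : Continuous fun t : ℝ => (t₁ - t) ^ (β - α) := by
    rw [continuous_iff_continuousAt]
    intro x
    exact (Real.continuousAt_rpow_const _ _ (Or.inr (by linarith))).comp
      ((continuous_const.sub continuous_id).continuousAt)
  have hψcont : ContinuousOn ψ (Icc t₀ t₁) := by
    rw [hψdef]
    exact ((hpowcont.continuousOn.mul hf).sub continuousOn_const)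
  -- pointwise identity on uIcc
  have hpt : ∀ t ∈ uIcc t₀ t₁,
      (t₁ - t) ^ (α - 1) * ψ t
        = (t₁ - t) ^ (β - 1) * f t - k * (t₁ - t) ^ (α - 1) := by
    intro t htmem
    rw [huIcc] at htmem
    have hbase : (0:ℝ) ≤ t₁ - t := by linarith [htmem.2]
    have hsplit : (t₁ - t) ^ (β - 1) = (t₁ - t) ^ (α - 1) * (t₁ - t) ^ (β - α) := by
      rw [← Real.rpow_add' hbase (by intro hc; simp at hc; linarith)]
      ring_nf
    simp only [hψdef]
    rw [hsplit]; ring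
  -- integrability of pieces
  have hiβf : IntervalIntegrable (fun t => (t₁ - t) ^ (β - 1) * f t) volume t₀ t₁ :=
    hiβ.mul_continuousOn (by rw [huIcc]; exact hf)
  have hiαψ : IntervalIntegrable (fun t => (t₁ - t) ^ (α - 1) * ψ t) volume t₀ t₁ :=
    hiα.mul_continuousOn (by rw [huIcc]; exact hψcont)
  have hikα : IntervalIntegrable (fun t => k * (t₁ - t) ^ (α - 1)) volume t₀ t₁ :=
    hiα.const_mul k
  -- constraint
  have hcon : (∫ t in t₀..t₁, (t₁ - t) ^ (α - 1) * ψ t) = 0 := by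
    rw [intervalIntegral.integral_congr hpt,
      intervalIntegral.integral_sub hiβf hikα,
      intervalIntegral.integral_const_mul, hA]
    rw [← hBdef, ← hkA]; ring
  have hQ := h ψ hψcont hcon
  -- second pointwise identity
  have hpt2 : ∀ t ∈ uIcc t₀ t₁,
      (t₁ - t) ^ (α - 1) * (ψ t)^2
        = (t₁ - t) ^ (β - 1) * f t * ψ t - k * ((t₁ - t) ^ (α - 1) * ψ t) := by
    intro t htmem
    have h1 := hpt t htmem
    calc (t₁ - t) ^ (α - 1) * (ψ t)^2
        = ((t₁ - t) ^ (α - 1) * ψ t) * ψ t := by ring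
      _ = ((t₁ - t) ^ (β - 1) * f t - k * (t₁ - t) ^ (α - 1)) * ψ t := by rw [h1]
      _ = (t₁ - t) ^ (β - 1) * f t * ψ t - k * ((t₁ - t) ^ (α - 1) * ψ t) := by ring
  have hzero : (∫ t in t₀..t₁, (t₁ - t) ^ (α - 1) * (ψ t)^2) = 0 := by
    have hiβfψ : IntervalIntegrable (fun t => (t₁ - t) ^ (β - 1) * f t * ψ t) volume t₀ t₁ := by
      have := hiβ.mul_continuousOn (g := fun t => f t * ψ t)
        (by rw [huIcc]; exact hf.mul hψcont)
      simpa [mul_assoc] using this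
    rw [intervalIntegral.integral_congr hpt2,
      intervalIntegral.integral_sub hiβfψ (hiαψ.const_mul k),
      intervalIntegral.integral_const_mul, hQ, hcon]
    ring
  -- the nonnegative integrand vanishes a.e.
  have hiαψ2 : IntervalIntegrable (fun t => (t₁ - t) ^ (α - 1) * (ψ t)^2) volume t₀ t₁ :=
    hiα.mul_continuousOn (by rw [huIcc]; exact (hψcont.pow 2))
  have hae : (fun t => (t₁ - t) ^ (α - 1) * (ψ t)^2)
      =ᵐ[volume.restrict (Ioc t₀ t₁)] 0 := by
    have hnn : 0 ≤ᵐ[volume.restrict (Ioc t₀ t₁)]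
        (fun t => (t₁ - t) ^ (α - 1) * (ψ t)^2) := by
      filter_upwards [ae_restrict_mem measurableSet_Ioc] with t htm
      exact mul_nonneg (Real.rpow_nonneg (by linarith [htm.2]) _) (sq_nonneg _)
    exact (intervalIntegral.integral_eq_zero_iff_of_le_of_nonneg_ae ht.le hnn hiαψ2).mp hzero
  -- continuity on Ioo, hence pointwise zero there
  have hψ0 : ∀ t ∈ Ioo t₀ t₁, ψ t = 0 := by
    have haeIoo : (fun t => (t₁ - t) ^ (α - 1) * (ψ t)^2)
        =ᵐ[volume.restrict (Ioo t₀ t₁)] 0 :=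
      ae_restrict_of_ae_restrict_of_subset Ioo_subset_Ioc_self hae
    have hwcont : ContinuousOn (fun t : ℝ => (t₁ - t) ^ (α - 1)) (Ioo t₀ t₁) := by
      intro x hx
      apply ContinuousAt.continuousWithinAt
      exact (Real.continuousAt_rpow_const _ _
          (Or.inl (show t₁ - x ≠ 0 from (by linarith [hx.2] : (0:ℝ) < t₁ - x).ne'))).comp
        ((continuous_const.sub continuous_id).continuousAt)
    have hcontIoo : ContinuousOn (fun t => (t₁ - t) ^ (α - 1) * (ψ t)^2) (Ioo t₀ t₁) :=
      hwcont.mul ((hψcont.mono Ioo_subset_Icc_self).pow 2)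
    have heq := MeasureTheory.Measure.eqOn_Ioo_of_ae_eq (μ := volume) haeIoo hcontIoo continuousOn_const
    intro t htmem
    have h0 := heq htmem
    simp only [Pi.zero_apply] at h0
    have hwpos : 0 < (t₁ - t) ^ (α - 1) := Real.rpow_pos_of_pos (by linarith [htmem.2]) _
    have hsq : (ψ t)^2 = 0 := by
      rcases mul_eq_zero.mp h0 with hc | hc
      · exact absurd hc hwpos.ne'
      · exact hc
    exact pow_eq_zero_iff two_ne_zero |>.mp hsq
  -- limit argument: k = 0
  have hk0 : k = 0 := by
    have hne : (𝓝[Ioo t₀ t₁] t₁).NeBot := by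
      rw [← mem_closure_iff_nhdsWithin_neBot, closure_Ioo ht.ne]
      exact right_mem_Icc.mpr ht.le
    have htend1 : Tendsto (fun t => (t₁ - t) ^ (β - α) * f t) (𝓝[Ioo t₀ t₁] t₁) (𝓝 0) := by
      have hp : Tendsto (fun t => (t₁ - t) ^ (β - α)) (𝓝[Ioo t₀ t₁] t₁) (𝓝 0) := by
        have := (hpowcont.tendsto t₁).mono_left (nhdsWithin_le_nhds (s := Ioo t₀ t₁))
        simpa [Real.zero_rpow (by linarith : β - α ≠ 0)] using this
      have hftend : Tendsto f (𝓝[Ioo t₀ t₁] t₁) (𝓝 (f t₁)) :=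
        (hf.continuousWithinAt (right_mem_Icc.mpr ht.le)).mono_left
          (nhdsWithin_mono _ Ioo_subset_Icc_self)
      simpa using hp.mul hftend
    have htend2 : Tendsto (fun t => (t₁ - t) ^ (β - α) * f t) (𝓝[Ioo t₀ t₁] t₁) (𝓝 k) := by
      apply Tendsto.congr' _ tendsto_const_nhds
      filter_upwards [self_mem_nhdsWithin] with t htmem
      have := hψ0 t htmem
      simp only [hψdef] at this
      linarith
    exact (tendsto_nhds_unique htend2 htend1)
  -- f = 0 on Ioo
  have hfIoo : ∀ t ∈ Ioo t₀ t₁, f t = 0 := by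
    intro t htmem
    have := hψ0 t htmem
    simp only [hψdef, hk0, sub_zero] at this
    have hwpos : 0 < (t₁ - t) ^ (β - α) := Real.rpow_pos_of_pos (by linarith [htmem.2]) _
    exact (mul_eq_zero.mp this).resolve_left (ne_of_gt hwpos)
  -- f t₀ = 0 by continuity
  intro t htmem
  rcases eq_or_lt_of_le htmem.1 with heq | hlt
  · have hne : (𝓝[Ioo t t₁] t).NeBot := by
      rw [← mem_closure_iff_nhdsWithin_neBot, closure_Ioo (htmem.2.ne : t ≠ t₁)]
      exact left_mem_Icc.mpr (le_of_lt htmem.2)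
    have h1 : Tendsto f (𝓝[Ioo t t₁] t) (𝓝 (f t)) :=
      (hf.continuousWithinAt ⟨htmem.1, htmem.2.le⟩).mono_left
        (nhdsWithin_mono _ (by rw [← heq]; exact Ioo_subset_Icc_self))
    have h2 : Tendsto f (𝓝[Ioo t t₁] t) (𝓝 0) := by
      apply Tendsto.congr' _ tendsto_const_nhds
      filter_upwards [self_mem_nhdsWithin] with s hs
      exact (hfIoo s (by rw [← heq] at hs; exact hs)).symm
    exact tendsto_nhds_unique h1 h2
  · exact hfIoo t ⟨hlt, htmem.2⟩
end

section
/- With ψ[l₁, l₂](t, ε) = (t − (τ + l₁ε))^α − (t − (τ + l₂ε))^α for l₂ > l₁ and φ(t, ε) = ψ[0, a](t, ε) − (a/b)·ψ[a, a+b](t, ε), the ratio k(ε) = φ(t₁, ε)/ψ[0, a+b](t₁, ε) tends to 0 as ε → 0⁺. -/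
open Filter Set Real

theorem stmt9 (α a b τ t₁ : ℝ) (hα0 : 0 < α) (hα1 : α ≤ 1)
    (ha : 0 < a) (hb : 0 < b) (hτ : τ < t₁) :
    Filter.Tendsto (fun ε : ℝ =>
      ((((t₁ - τ) ^ α - (t₁ - (τ + a * ε)) ^ α)
        - a / b * ((t₁ - (τ + a * ε)) ^ α - (t₁ - (τ + (a + b) * ε)) ^ α))
      / ((t₁ - τ) ^ α - (t₁ - (τ + (a + b) * ε)) ^ α)))
      (nhdsWithin 0 (Set.Ioi 0)) (nhds 0) := by
  set c : ℝ := t₁ - τ with hc_def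
  have hc : 0 < c := sub_pos.mpr hτ
  have hab : 0 < a + b := by linarith
  -- derivative functions
  set P : ℝ → ℝ := fun ε => t₁ - (τ + a * ε) with hP_def
  set Q : ℝ → ℝ := fun ε => t₁ - (τ + (a + b) * ε) with hQ_def
  set f' : ℝ → ℝ := fun ε =>
    (0 - α * P ε ^ (α - 1) * (-a))
      - a / b * (α * P ε ^ (α - 1) * (-a) - α * Q ε ^ (α - 1) * (-(a + b))) with hf'_def
  set g' : ℝ → ℝ := fun ε => 0 - α * Q ε ^ (α - 1) * (-(a + b)) with hg'_def
  have hmem : Ioo (0:ℝ) (c / (a + b)) ∈ nhdsWithin (0:ℝ) (Ioi 0) :=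
    Ioo_mem_nhdsGT_of_mem ⟨le_refl _, div_pos hc hab⟩
  have hQpos : ∀ ε ∈ Ioo (0:ℝ) (c / (a+b)), 0 < Q ε := by
    intro ε hε
    have : (a + b) * ε < c := by
      have := hε.2
      calc (a+b)*ε < (a+b)*(c/(a+b)) := by exact mul_lt_mul_of_pos_left this hab
        _ = c := by field_simp
    simp only [hQ_def]; linarith [hc]
  have hPpos : ∀ ε ∈ Ioo (0:ℝ) (c / (a+b)), 0 < P ε := by
    intro ε hε
    have h1 := hQpos ε hε
    have : a * ε ≤ (a+b) * ε := by nlinarith [hε.1]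
    simp only [hP_def]; simp only [hQ_def] at h1; linarith
  -- HasDerivAt facts
  have hPder : ∀ ε : ℝ, HasDerivAt P (-a) ε := by
    intro ε
    simpa using ((hasDerivAt_id ε).const_mul a).const_add τ |>.const_sub t₁
  have hQder : ∀ ε : ℝ, HasDerivAt Q (-(a+b)) ε := by
    intro ε
    simpa using ((hasDerivAt_id ε).const_mul (a+b)).const_add τ |>.const_sub t₁
  have hPα : ∀ ε ∈ Ioo (0:ℝ) (c/(a+b)),
      HasDerivAt (fun ε => P ε ^ α) (α * P ε ^ (α - 1) * (-a)) ε := by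
    intro ε hε
    exact (Real.hasDerivAt_rpow_const (Or.inl (hPpos ε hε).ne')).comp ε (hPder ε)
  have hQα : ∀ ε ∈ Ioo (0:ℝ) (c/(a+b)),
      HasDerivAt (fun ε => Q ε ^ α) (α * Q ε ^ (α - 1) * (-(a+b))) ε := by
    intro ε hε
    exact (Real.hasDerivAt_rpow_const (Or.inl (hQpos ε hε).ne')).comp ε (hQder ε)
  -- continuity facts for tendsto of base functions
  have hPtend : Tendsto P (nhdsWithin 0 (Ioi 0)) (nhds c) := by
    have : Tendsto P (nhds 0) (nhds (t₁ - (τ + a * 0))) :=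
      tendsto_const_nhds.sub (tendsto_const_nhds.add (tendsto_id.const_mul a))
    simpa using this.mono_left nhdsWithin_le_nhds
  have hQtend : Tendsto Q (nhdsWithin 0 (Ioi 0)) (nhds c) := by
    have : Tendsto Q (nhds 0) (nhds (t₁ - (τ + (a+b) * 0))) :=
      tendsto_const_nhds.sub (tendsto_const_nhds.add (tendsto_id.const_mul (a+b)))
    simpa using this.mono_left nhdsWithin_le_nhds
  have hrpow : ∀ p : ℝ, Tendsto (fun x : ℝ => x ^ p) (nhds c) (nhds (c ^ p)) :=
    fun p => (Real.continuousAt_rpow_const c p (Or.inl hc.ne')).tendsto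
  have hPαtend : Tendsto (fun ε => P ε ^ α) (nhdsWithin 0 (Ioi 0)) (nhds (c ^ α)) :=
    (hrpow α).comp hPtend
  have hQαtend : Tendsto (fun ε => Q ε ^ α) (nhdsWithin 0 (Ioi 0)) (nhds (c ^ α)) :=
    (hrpow α).comp hQtend
  have hPα1tend : Tendsto (fun ε => P ε ^ (α-1)) (nhdsWithin 0 (Ioi 0)) (nhds (c ^ (α-1))) :=
    (hrpow (α-1)).comp hPtend
  have hQα1tend : Tendsto (fun ε => Q ε ^ (α-1)) (nhdsWithin 0 (Ioi 0)) (nhds (c ^ (α-1))) :=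
    (hrpow (α-1)).comp hQtend
  apply HasDerivAt.lhopital_zero_nhdsGT (f' := f') (g' := g')
  · filter_upwards [hmem] with ε hε
    exact (((hasDerivAt_const ε (c^α)).sub (hPα ε hε)).sub
      (((hPα ε hε).sub (hQα ε hε)).const_mul (a/b)))
  · filter_upwards [hmem] with ε hε
    exact (hasDerivAt_const ε (c^α)).sub (hQα ε hε)
  · filter_upwards [hmem] with ε hε
    have h1 : 0 < Q ε ^ (α - 1) := Real.rpow_pos_of_pos (hQpos ε hε) _
    simp only [hg'_def]
    nlinarith [mul_pos (mul_pos hα0 h1) hab]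
  · have : Tendsto (fun ε => (c ^ α - P ε ^ α) - a/b * (P ε ^ α - Q ε ^ α))
        (nhdsWithin 0 (Ioi 0)) (nhds ((c^α - c^α) - a/b*(c^α - c^α))) :=
      ((tendsto_const_nhds.sub hPαtend).sub ((hPαtend.sub hQαtend).const_mul _))
    simpa using this
  · have : Tendsto (fun ε => c ^ α - Q ε ^ α)
        (nhdsWithin 0 (Ioi 0)) (nhds (c^α - c^α)) := tendsto_const_nhds.sub hQαtend
    simpa using this
  · have hnum : Tendsto f' (nhdsWithin 0 (Ioi 0))
        (nhds ((0 - α * c ^ (α-1) * (-a)) - a/b * (α * c ^ (α-1) * (-a) - α * c ^ (α-1) * (-(a+b))))) := by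
      apply Tendsto.sub
      · exact tendsto_const_nhds.sub ((tendsto_const_nhds.mul hPα1tend).mul tendsto_const_nhds)
      · exact (((tendsto_const_nhds.mul hPα1tend).mul tendsto_const_nhds).sub
          ((tendsto_const_nhds.mul hQα1tend).mul tendsto_const_nhds)).const_mul _
    have hden : Tendsto g' (nhdsWithin 0 (Ioi 0))
        (nhds (0 - α * c ^ (α-1) * (-(a+b)))) := by
      exact tendsto_const_nhds.sub ((tendsto_const_nhds.mul hQα1tend).mul tendsto_const_nhds)
    have hd0 : (0 - α * c ^ (α-1) * (-(a+b))) ≠ 0 := by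
      have h1 : 0 < c ^ (α - 1) := Real.rpow_pos_of_pos hc _
      nlinarith [mul_pos (mul_pos hα0 h1) hab]
    have := hnum.div hden hd0
    have hz : ((0 - α * c ^ (α-1) * (-a)) - a/b * (α * c ^ (α-1) * (-a) - α * c ^ (α-1) * (-(a+b)))) = 0 := by
      field_simp
      ring
    have heq : ((0 - α * c ^ (α-1) * (-a)) - a/b * (α * c ^ (α-1) * (-a) - α * c ^ (α-1) * (-(a+b)))) /
        (0 - α * c ^ (α-1) * (-(a+b))) = 0 := by
      rw [hz, zero_div]
    rwa [heq] at this
end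

section
/- Let L : ℝⁿ → ℝ be differentiable at y ∈ ℝⁿ. Suppose that for all a, b > 0 and all ξ ∈ ℝⁿ one has a·L(y + ξ) + b·L(y − (a/b)·ξ) − (a+b)·L(y) ≥ 0. Then for every ξ ∈ ℝⁿ, L(y + ξ) − L(y) − ⟨∇L(y), ξ⟩ ≥ 0. -/
open RealInnerProductSpace

/-- Weierstrass condition from the first-order necessary condition. -/
theorem stmt11 (n : ℕ) (L : EuclideanSpace ℝ (Fin n) → ℝ)
    (y : EuclideanSpace ℝ (Fin n)) (hd : DifferentiableAt ℝ L y)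
    (h : ∀ a b : ℝ, 0 < a → 0 < b → ∀ ξ : EuclideanSpace ℝ (Fin n),
      a * L (y + ξ) + b * L (y - (a / b) • ξ) - (a + b) * L y ≥ 0) :
    ∀ ξ : EuclideanSpace ℝ (Fin n),
      L (y + ξ) - L y - (inner ℝ (gradient L y) (ξ) : ℝ) ≥ 0 := by
  intro ξ
  have hF := hd.hasGradientAt.hasFDerivAt
  have hline : HasLineDerivAt ℝ L
      ((InnerProductSpace.toDual ℝ _ (gradient L y)) (-ξ)) y (-ξ) :=
    hF.hasLineDerivAt (-ξ)
  have hinner : ((InnerProductSpace.toDual ℝ _ (gradient L y)) (-ξ)) =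
      -(inner ℝ (gradient L y) ξ : ℝ) := by
    rw [InnerProductSpace.toDual_apply_apply, inner_neg_right]
  -- slope tendsto
  have hslope : Filter.Tendsto (fun t : ℝ => (L (y + t • (-ξ)) - L y) / t)
      (nhdsWithin 0 (Set.Ioi 0)) (nhds (-(inner ℝ (gradient L y) ξ : ℝ))) := by
    have := hasDerivAt_iff_tendsto_slope.1 (hline : HasDerivAt _ _ _)
    rw [hinner] at this
    have h2 := this.mono_left (nhdsWithin_mono 0 (by
      intro x hx
      exact Set.mem_compl_singleton_iff.2 (ne_of_gt hx)))
    refine h2.congr' ?_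
    filter_upwards [self_mem_nhdsWithin] with t ht
    simp [slope_def_field, div_eq_inv_mul]
  have key : ∀ᶠ t in nhdsWithin (0:ℝ) (Set.Ioi 0),
      -(L (y + ξ) - L y) ≤ (L (y + t • (-ξ)) - L y) / t := by
    filter_upwards [self_mem_nhdsWithin] with t ht
    have ht' : (0:ℝ) < t := ht
    have := h t 1 ht' one_pos ξ
    have heq : y - (t / 1) • ξ = y + t • (-ξ) := by
      simp [sub_eq_add_neg]
    rw [heq] at this
    rw [le_div_iff₀ ht']
    nlinarith
  have hle : -(L (y + ξ) - L y) ≤ -(inner ℝ (gradient L y) ξ : ℝ) :=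
    ge_of_tendsto hslope key
  linarith
end
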